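/- (Corollary 1, concave case.) Let f be a contest production function, C a cost function, and consider a semi-symmetric conflict network with size set K, multiplicities d_k > 0 and prizes v_k > 0. Let (x_k*)_{k∈K} be a positive solution of the DE first-order system and x^u > 0 a solution of the UE first-order equation, and define the equilibrium payoff function Π(X) = Σ_{k∈K} d_k · v_k / k − C(X). If h(x) = f(x)/f'(x) is concave on (0,∞), then the expected payoff in DE does not exceed that in UE: Π(Σ_{k∈K} d_k x_k*) ≤ Π((Σ_{k∈K} d_k) x^u). -/

import Mathlib

open Set Finset

private lemma derivC_mono (C : ℝ → ℝ) (hC_smooth : ContDiffOn ℝ 2 C (Set.Ici (0:ℝ)))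
    (hC_conv : ConvexOn ℝ (Set.Ici (0:ℝ)) C) {a b : ℝ} (ha : 0 < a) (hab : a < b) :
    deriv C a ≤ deriv C b := by
  have hda : DifferentiableAt ℝ C a :=
    ((hC_smooth.contDiffAt (Ici_mem_nhds ha)).differentiableAt (by norm_num))
  have hdb : DifferentiableAt ℝ C b :=
    ((hC_smooth.contDiffAt (Ici_mem_nhds (ha.trans hab))).differentiableAt (by norm_num))
  calc deriv C a ≤ slope C a b :=
        hC_conv.deriv_le_slope ha.le (ha.trans hab).le hab hda
    _ ≤ deriv C b := hC_conv.slope_le_deriv ha.le (ha.trans hab).le hab hdb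

/-- Corollary 1, concave case: if h = f/f' is concave on (0,∞), the expected
payoff under DE does not exceed that under UE. -/
theorem payoff_de_le_ue_of_concave
    (f : ℝ → ℝ)
    (hf0 : f 0 = 0)
    (hf_diff : ∀ x > (0 : ℝ), DifferentiableAt ℝ f x)
    (hf'_diff : ∀ x > (0 : ℝ), DifferentiableAt ℝ (deriv f) x)
    (hf'_pos : ∀ x > (0 : ℝ), 0 < deriv f x)
    (hf''_nonpos : ∀ x > (0 : ℝ), deriv (deriv f) x ≤ 0)
    (C : ℝ → ℝ)
    (hC_smooth : ContDiffOn ℝ 2 C (Set.Ici (0 : ℝ)))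
    (hC_mono : StrictMonoOn C (Set.Ici (0 : ℝ)))
    (hC_conv : ConvexOn ℝ (Set.Ici (0 : ℝ)) C)
    (hC'_pos : ∀ μ > (0 : ℝ), 0 < deriv C μ)
    (K : Finset ℕ) (hK : K.Nonempty) (hK2 : ∀ k ∈ K, 2 ≤ k)
    (d v : ℕ → ℝ) (hd : ∀ k ∈ K, 0 < d k) (hv : ∀ k ∈ K, 0 < v k)
    (xs : ℕ → ℝ) (hxs : ∀ k ∈ K, 0 < xs k)
    (hDE : ∀ k ∈ K, v k * (((k : ℝ) - 1) / (k : ℝ) ^ 2) * (deriv f (xs k) / f (xs k))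
      = deriv C (∑ ℓ ∈ K, d ℓ * xs ℓ))
    (xu : ℝ) (hxu : 0 < xu)
    (hUE : (∑ ℓ ∈ K, d ℓ * v ℓ * (((ℓ : ℝ) - 1) / (ℓ : ℝ) ^ 2)) * (deriv f xu / f xu)
      = deriv C ((∑ ℓ ∈ K, d ℓ) * xu) * (∑ ℓ ∈ K, d ℓ))
    (hconc : ConcaveOn ℝ (Set.Ioi (0 : ℝ)) (fun x => f x / deriv f x)) :
    (∑ k ∈ K, d k * v k / (k : ℝ)) - C (∑ k ∈ K, d k * xs k)
      ≤ (∑ k ∈ K, d k * v k / (k : ℝ)) - C ((∑ k ∈ K, d k) * xu) := by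
  set D : ℝ := ∑ ℓ ∈ K, d ℓ with hDdef
  set X : ℝ := ∑ ℓ ∈ K, d ℓ * xs ℓ with hXdef
  set S : ℝ := ∑ ℓ ∈ K, d ℓ * v ℓ * (((ℓ : ℝ) - 1) / (ℓ : ℝ) ^ 2) with hSdef
  have hD : 0 < D := Finset.sum_pos hd hK
  have hX : 0 < X := Finset.sum_pos (fun k hk => mul_pos (hd k hk) (hxs k hk)) hK
  have ha : ∀ k ∈ K, 0 < ((k : ℝ) - 1) / (k : ℝ) ^ 2 := by
    intro k hk
    have h2 : (2 : ℝ) ≤ (k : ℝ) := by exact_mod_cast hK2 k hk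
    apply div_pos <;> nlinarith
  have hS : 0 < S :=
    Finset.sum_pos (fun k hk => mul_pos (mul_pos (hd k hk) (hv k hk)) (ha k hk)) hK
  have hC'X : 0 < deriv C X := hC'_pos X hX
  have hC'u : 0 < deriv C (D * xu) := hC'_pos _ (mul_pos hD hxu)
  -- positivity of f at DE solutions and value of h there
  have hfxs : ∀ k ∈ K, 0 < f (xs k) := by
    intro k hk
    have heq := hDE k hk
    by_contra hle
    push_neg at hle
    rcases lt_or_eq_of_le hle with hlt | hze
    · have hneg : v k * (((k : ℝ) - 1) / (k : ℝ) ^ 2) * (deriv f (xs k) / f (xs k)) < 0 := by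
        apply mul_neg_of_pos_of_neg (mul_pos (hv k hk) (ha k hk))
        exact div_neg_of_pos_of_neg (hf'_pos _ (hxs k hk)) hlt
      rw [heq] at hneg
      linarith
    · rw [hze, div_zero, mul_zero] at heq
      linarith
  have hhxs : ∀ k ∈ K,
      f (xs k) / deriv f (xs k) = v k * (((k : ℝ) - 1) / (k : ℝ) ^ 2) / deriv C X := by
    intro k hk
    have heq := hDE k hk
    have hf' := hf'_pos _ (hxs k hk)
    have hfx := hfxs k hk
    have hk2 : (2 : ℝ) ≤ (k : ℝ) := by exact_mod_cast hK2 k hk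
    have hkp : (0 : ℝ) < (k : ℝ) ^ 2 := by nlinarith
    rw [eq_div_iff hC'X.ne', ← heq]
    field_simp
  -- positivity of f at UE solution and value of h there
  have hfxu : 0 < f xu := by
    by_contra hle
    push_neg at hle
    rcases lt_or_eq_of_le hle with hlt | hze
    · have hneg : S * (deriv f xu / f xu) < 0 :=
        mul_neg_of_pos_of_neg hS (div_neg_of_pos_of_neg (hf'_pos _ hxu) hlt)
      rw [hUE] at hneg
      nlinarith [mul_pos hC'u hD]
    · rw [hze, div_zero, mul_zero] at hUE
      nlinarith [mul_pos hC'u hD]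
  have hf'u := hf'_pos _ hxu
  have hhxu : f xu / deriv f xu = S / (D * deriv C (D * xu)) := by
    have h1 : S * deriv f xu = deriv C (D * xu) * D * f xu := by
      field_simp at hUE
      linarith [hUE]
    rw [eq_div_iff (mul_pos hD hC'u).ne', div_mul_eq_mul_div, div_eq_iff hf'u.ne']
    linear_combination -h1
  -- Jensen: h (X/D) ≥ S / (D * deriv C X)
  set y : ℝ := X / D with hydef
  have hy : 0 < y := div_pos hX hD
  have hjensen : S / (D * deriv C X) ≤ f y / deriv f y := by
    have hw : ∀ k ∈ K, (0 : ℝ) ≤ d k / D := fun k hk => (div_pos (hd k hk) hD).le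
    have hw1 : ∑ k ∈ K, d k / D = 1 := by
      rw [← Finset.sum_div]
      exact div_self hD.ne'
    have hmem : ∀ k ∈ K, xs k ∈ Set.Ioi (0 : ℝ) := fun k hk => hxs k hk
    have hj := hconc.le_map_sum hw hw1 hmem
    simp only [smul_eq_mul] at hj
    have hsum : ∑ k ∈ K, (d k / D) * xs k = y := by
      rw [hydef, hXdef, Finset.sum_div]
      refine Finset.sum_congr rfl fun k hk => ?_
      ring
    have hsum2 : ∑ k ∈ K, (d k / D) * (f (xs k) / deriv f (xs k))
        = S / (D * deriv C X) := by
      rw [hSdef, Finset.sum_div]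
      refine Finset.sum_congr rfl fun k hk => ?_
      rw [hhxs k hk]
      rw [div_mul_div_comm, div_eq_div_iff (by positivity) (by positivity)]
      ring
    rw [hsum, hsum2] at hj
    exact hj
  have hhy : 0 < f y / deriv f y :=
    lt_of_lt_of_le (div_pos hS (mul_pos hD hC'X)) hjensen
  have hfy : 0 < f y := by
    rcases div_pos_iff.mp hhy with ⟨h1, _⟩ | ⟨_, h2⟩
    · exact h1
    · linarith [hf'_pos y hy]
  -- main claim : D * xu ≤ X
  have hmain : D * xu ≤ X := by
    by_contra hlt
    push_neg at hlt
    have hyu : y < xu := by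
      rw [hydef, div_lt_iff₀ hD]
      linarith [mul_comm D xu]
    have hCle : deriv C X ≤ deriv C (D * xu) := derivC_mono C hC_smooth hC_conv hX hlt
    have hle : f xu / deriv f xu ≤ f y / deriv f y := by
      rw [hhxu]
      refine le_trans ?_ hjensen
      gcongr
    -- f is positive on Ici y
    have hfpos : ∀ x ∈ Set.Ici y, 0 < f x := by
      have hmono : StrictMonoOn f (Set.Ici y) := by
        apply strictMonoOn_of_deriv_pos (convex_Ici y)
        · intro x hx
          exact (hf_diff x (lt_of_lt_of_le hy hx)).continuousAt.continuousWithinAt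
        · intro x hx
          rw [interior_Ici] at hx
          exact hf'_pos x (hy.trans hx)
      intro x hx
      rcases eq_or_lt_of_le (Set.mem_Ici.mp hx) with rfl | hltx
      · exact hfy
      · exact lt_trans hfy (hmono self_mem_Ici hx hltx)
    -- h = f/f' is strictly monotone on Ici y
    have hhmono : StrictMonoOn (fun x : ℝ => f x / deriv f x) (Set.Ici y) := by
      apply strictMonoOn_of_deriv_pos (convex_Ici y)
      · intro x hx
        have hx0 : 0 < x := lt_of_lt_of_le hy hx
        exact ((hf_diff x hx0).div (hf'_diff x hx0)
          (hf'_pos x hx0).ne').continuousAt.continuousWithinAt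
      · intro x hx
        rw [interior_Ici] at hx
        have hx0 : 0 < x := hy.trans hx
        have hf' := hf'_pos x hx0
        rw [deriv_fun_div (hf_diff x hx0) (hf'_diff x hx0) hf'.ne']
        apply div_pos _ (pow_pos hf' 2)
        have hfx : 0 < f x := hfpos x (Set.mem_Ici.mpr (Set.mem_Ioi.mp hx).le)
        nlinarith [hf''_nonpos x hx0]
    have := hhmono self_mem_Ici hyu.le hyu
    simp only at this
    linarith
  -- conclude
  have hCfin : C (D * xu) ≤ C X := by
    rcases eq_or_lt_of_le hmain with heq | hlt
    · rw [heq]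
    · exact (hC_mono (mul_pos hD hxu).le hX.le hlt).le
  linarith
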